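/- Let Q ∈ ℝ^{n×n}, let φ(x) = x^⊤ Q x, and define a_{i,j} := Q_{i,j} + Q_{j,i} for i ≠ j and a_{i,i} := Q_{i,i}. For i ≠ j define S_{i,j} := Σ_{k ≠ i,j} max{0, a_{j,k} − a_{i,k}} + a_{j,j} − a_{i,i}. Let G = (V, E) be an order of n binary variables such that S_{i,j} ≤ 0 for every edge (i,j) ∈ E. Then G is valid with respect to minimization of φ, i.e., min { φ(x) : x ∈ {0,1}^n } = min { φ(x) : x ∈ B_n^G }. -/

import Mathlib

open Finset

/-- The set of binary vectors `{0,1}^n`, as real vectors. -/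
def Bset (n : ℕ) : Set (Fin n → ℝ) := {x | ∀ i, x i = 0 ∨ x i = 1}

/-- The subset of `{0,1}^n` ordered by an edge set `E`. -/
def BsetG (n : ℕ) (E : Finset (Fin n × Fin n)) : Set (Fin n → ℝ) :=
  {x | x ∈ Bset n ∧ ∀ e ∈ E, x e.1 = 1 → x e.2 = 1}

/-- The directed graph on `{1,…,n}` with edge set `E` has no directed cycle. -/
def IsAcyclicEdges (n : ℕ) (E : Finset (Fin n × Fin n)) : Prop :=
  ∀ i : Fin n, ¬ Relation.TransGen (fun a b => (a, b) ∈ E) i i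

/-- Quadratic form `x ⊤ Q x = ∑ i ∑ j Q i j * x i * x j`. -/
def quadForm (n : ℕ) (Q : Matrix (Fin n) (Fin n) ℝ) (x : Fin n → ℝ) : ℝ :=
  ∑ i, ∑ j, Q i j * x i * x j

/-- Coefficient `a_{i,j}` of `x_i x_j` (or of `x_i` if `i = j`) in `x ⊤ Q x`. -/
def aCoef (n : ℕ) (Q : Matrix (Fin n) (Fin n) ℝ) (i j : Fin n) : ℝ :=
  if i = j then Q i i else Q i j + Q j i

/-- `S_{i,j} = ∑_{k ≠ i,j} max {0, a_{j,k} − a_{i,k}} + a_{j,j} − a_{i,i}`. -/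
noncomputable def Sval (n : ℕ) (Q : Matrix (Fin n) (Fin n) ℝ) (i j : Fin n) : ℝ :=
  (∑ k ∈ univ.filter (fun k => k ≠ i ∧ k ≠ j), max 0 (aCoef n Q j k - aCoef n Q i k))
    + aCoef n Q j j - aCoef n Q i i

/- ------------------ auxiliary material ------------------ -/

lemma sum_split {M : Type*} [AddCommMonoid M] {n : ℕ} (i j : Fin n) (hij : i ≠ j)
    (g : Fin n → M) :
    ∑ k, g k = (∑ k ∈ univ.filter (fun k => k ≠ i ∧ k ≠ j), g k) + g i + g j := by
  have hF : univ.filter (fun k => k ≠ i ∧ k ≠ j) = univ \ ({i, j} : Finset (Fin n)) := by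
    ext k; simp [not_or]
  have h2 : (({i, j} : Finset (Fin n))).sum g = g i + g j := Finset.sum_pair hij
  rw [hF, ← Finset.sum_sdiff (Finset.subset_univ ({i, j} : Finset (Fin n))) (f := g), h2,
    add_assoc]

/-- rank of a vertex: number of strict predecessors. -/
noncomputable def rankE {n : ℕ} (E : Finset (Fin n × Fin n)) (k : Fin n) : ℕ :=
  {p : Fin n | Relation.TransGen (fun a b => (a, b) ∈ E) p k}.ncard

lemma rank_lt {n : ℕ} {E : Finset (Fin n × Fin n)} (hdag : IsAcyclicEdges n E)
    {i j : Fin n} (he : (i, j) ∈ E) : rankE E i < rankE E j := by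
  apply Set.ncard_lt_ncard _ (Set.toFinite _)
  constructor
  · intro p hp
    exact Relation.TransGen.tail hp he
  · intro h
    exact hdag i (h (Relation.TransGen.single he))

/-- measure of a binary vector: sum of ranks of zero coordinates. -/
noncomputable def measE {n : ℕ} (E : Finset (Fin n × Fin n)) (x : Fin n → ℝ) : ℕ :=
  ∑ k, if x k = 0 then rankE E k else 0

lemma qf_split (n : ℕ) (Q : Matrix (Fin n) (Fin n) ℝ) (i j : Fin n) (hij : i ≠ j)
    (z : Fin n → ℝ) :
    quadForm n Q z =
      (∑ p ∈ univ.filter (fun k => k ≠ i ∧ k ≠ j),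
        ∑ q ∈ univ.filter (fun k => k ≠ i ∧ k ≠ j), Q p q * z p * z q)
      + (∑ p ∈ univ.filter (fun k => k ≠ i ∧ k ≠ j), Q p i * z p * z i)
      + (∑ p ∈ univ.filter (fun k => k ≠ i ∧ k ≠ j), Q p j * z p * z j)
      + (∑ q ∈ univ.filter (fun k => k ≠ i ∧ k ≠ j), Q i q * z i * z q)
      + (∑ q ∈ univ.filter (fun k => k ≠ i ∧ k ≠ j), Q j q * z j * z q)
      + (Q i i * z i * z i + Q i j * z i * z j + Q j i * z j * z i + Q j j * z j * z j) := by
  set F := univ.filter (fun k : Fin n => k ≠ i ∧ k ≠ j) with hFdef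
  have h1 : quadForm n Q z
      = ∑ p ∈ F, (∑ q, Q p q * z p * z q) + (∑ q, Q i q * z i * z q)
        + (∑ q, Q j q * z j * z q) :=
    sum_split i j hij _
  have h2 : ∀ p : Fin n, ∑ q, Q p q * z p * z q
      = ∑ q ∈ F, Q p q * z p * z q + Q p i * z p * z i + Q p j * z p * z j :=
    fun p => sum_split i j hij _
  rw [h1, h2 i, h2 j]
  rw [Finset.sum_congr rfl (fun p _ => h2 p), Finset.sum_add_distrib, Finset.sum_add_distrib]
  ring

lemma qf_update (n : ℕ) (Q : Matrix (Fin n) (Fin n) ℝ) (x : Fin n → ℝ)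
    {i j : Fin n} (hij : i ≠ j) (hxi : x i = 1) (hxj : x j = 0) :
    quadForm n Q (Function.update (Function.update x i 0) j 1) =
      quadForm n Q x +
        ((∑ k ∈ univ.filter (fun k => k ≠ i ∧ k ≠ j),
            (aCoef n Q j k - aCoef n Q i k) * x k)
          + aCoef n Q j j - aCoef n Q i i) := by
  set F := univ.filter (fun k : Fin n => k ≠ i ∧ k ≠ j) with hFdef
  set y := Function.update (Function.update x i 0) j 1 with hydef
  have hyi : y i = 0 := by
    rw [hydef, Function.update_of_ne hij, Function.update_self]
  have hyj : y j = 1 := by rw [hydef, Function.update_self]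
  have hyF : ∀ k ∈ F, y k = x k := by
    intro k hk
    rw [hFdef] at hk
    simp only [Finset.mem_filter] at hk
    rw [hydef, Function.update_of_ne hk.2.2, Function.update_of_ne hk.2.1]
  have hmemF : ∀ k ∈ F, k ≠ i ∧ k ≠ j := by
    intro k hk; rw [hFdef] at hk; simpa using hk
  have hA : ∀ k ∈ F, (aCoef n Q j k - aCoef n Q i k) * x k
      = (Q j k + Q k j - (Q i k + Q k i)) * x k := by
    intro k hk
    obtain ⟨hki, hkj⟩ := hmemF k hk
    rw [aCoef, aCoef, if_neg (Ne.symm hkj), if_neg (Ne.symm hki)]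
  have hAjj : aCoef n Q j j = Q j j := by rw [aCoef, if_pos rfl]
  have hAii : aCoef n Q i i = Q i i := by rw [aCoef, if_pos rfl]
  have s1 : ∑ p ∈ F, ∑ q ∈ F, Q p q * y p * y q = ∑ p ∈ F, ∑ q ∈ F, Q p q * x p * x q := by
    refine Finset.sum_congr rfl (fun p hp => ?_)
    rw [hyF p hp]
    exact Finset.sum_congr rfl (fun q hq => by rw [hyF q hq])
  have s2 : ∑ p ∈ F, Q p i * y p * y i = ∑ p ∈ F, Q p i * x p * 0 :=
    Finset.sum_congr rfl (fun p hp => by rw [hyF p hp, hyi])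
  have s3 : ∑ p ∈ F, Q p j * y p * y j = ∑ p ∈ F, Q p j * x p * 1 :=
    Finset.sum_congr rfl (fun p hp => by rw [hyF p hp, hyj])
  have s4 : ∑ q ∈ F, Q i q * y i * y q = ∑ q ∈ F, Q i q * 0 * x q :=
    Finset.sum_congr rfl (fun q hq => by rw [hyF q hq, hyi])
  have s5 : ∑ q ∈ F, Q j q * y j * y q = ∑ q ∈ F, Q j q * 1 * x q :=
    Finset.sum_congr rfl (fun q hq => by rw [hyF q hq, hyj])
  have sA : ∑ k ∈ F, (aCoef n Q j k - aCoef n Q i k) * x k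
      = ∑ k ∈ F, (Q j k + Q k j - (Q i k + Q k i)) * x k :=
    Finset.sum_congr rfl hA
  rw [qf_split n Q i j hij y, qf_split n Q i j hij x, s1, s2, s3, s4, s5, sA]
  rw [hyi, hyj, hxi, hxj, hAjj, hAii]
  have e1 : ∑ p ∈ F, Q p i * x p * 0 = 0 := by
    rw [Finset.sum_congr rfl (fun p _ => by ring : ∀ p ∈ F, Q p i * x p * 0 = 0)]
    exact Finset.sum_const_zero
  have e2 : ∑ q ∈ F, Q i q * 0 * x q = 0 := by
    rw [Finset.sum_congr rfl (fun q _ => by ring : ∀ q ∈ F, Q i q * 0 * x q = 0)]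
    exact Finset.sum_const_zero
  have e3 : ∑ p ∈ F, Q p j * x p * 1 = ∑ p ∈ F, Q p j * x p :=
    Finset.sum_congr rfl (fun p _ => by ring)
  have e4 : ∑ q ∈ F, Q j q * 1 * x q = ∑ q ∈ F, Q j q * x q :=
    Finset.sum_congr rfl (fun q _ => by ring)
  have e5 : ∑ p ∈ F, Q p i * x p * 1 = ∑ p ∈ F, Q p i * x p :=
    Finset.sum_congr rfl (fun p _ => by ring)
  have e6 : ∑ q ∈ F, Q i q * 1 * x q = ∑ q ∈ F, Q i q * x q :=
    Finset.sum_congr rfl (fun q _ => by ring)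
  have e7 : ∑ p ∈ F, Q p j * x p * 0 = 0 := by
    rw [Finset.sum_congr rfl (fun p _ => by ring : ∀ p ∈ F, Q p j * x p * 0 = 0)]
    exact Finset.sum_const_zero
  have e8 : ∑ q ∈ F, Q j q * 0 * x q = 0 := by
    rw [Finset.sum_congr rfl (fun q _ => by ring : ∀ q ∈ F, Q j q * 0 * x q = 0)]
    exact Finset.sum_const_zero
  have e9 : ∑ k ∈ F, (Q j k + Q k j - (Q i k + Q k i)) * x k
      = ((∑ q ∈ F, Q j q * x q) + (∑ p ∈ F, Q p j * x p))
        - ((∑ q ∈ F, Q i q * x q) + (∑ p ∈ F, Q p i * x p)) := by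
    rw [← Finset.sum_add_distrib, ← Finset.sum_add_distrib, ← Finset.sum_sub_distrib]
    exact Finset.sum_congr rfl (fun k _ => by ring)
  rw [e1, e2, e3, e4, e5, e6, e7, e8, e9]
  ring

lemma meas_update (n : ℕ) (E : Finset (Fin n × Fin n)) (hdag : IsAcyclicEdges n E)
    (x : Fin n → ℝ) {i j : Fin n} (hij : i ≠ j) (he : (i, j) ∈ E)
    (hxi : x i = 1) (hxj : x j = 0) :
    measE E (Function.update (Function.update x i 0) j 1) < measE E x := by
  classical
  set y := Function.update (Function.update x i 0) j 1 with hydef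
  have hyi : y i = 0 := by
    rw [hydef, Function.update_of_ne hij, Function.update_self]
  have hyj : y j = 1 := by rw [hydef, Function.update_self]
  have hyF : ∀ k, k ≠ i → k ≠ j → y k = x k := by
    intro k hki hkj
    rw [hydef, Function.update_of_ne hkj, Function.update_of_ne hki]
  have h1 : measE E y = (∑ k ∈ univ.filter (fun k => k ≠ i ∧ k ≠ j),
      if y k = 0 then rankE E k else 0) + rankE E i := by
    rw [measE, sum_split i j hij, hyi, hyj, if_pos rfl, if_neg (by norm_num), add_zero]
  have h2 : measE E x = (∑ k ∈ univ.filter (fun k => k ≠ i ∧ k ≠ j),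
      if x k = 0 then rankE E k else 0) + rankE E j := by
    rw [measE, sum_split i j hij, hxi, hxj, if_pos rfl, if_neg (by norm_num), add_zero]
  have h3 : ∑ k ∈ univ.filter (fun k : Fin n => k ≠ i ∧ k ≠ j),
      (if y k = 0 then rankE E k else 0)
      = ∑ k ∈ univ.filter (fun k : Fin n => k ≠ i ∧ k ≠ j),
      (if x k = 0 then rankE E k else 0) := by
    refine Finset.sum_congr rfl (fun k hk => ?_)
    simp only [Finset.mem_filter] at hk
    rw [hyF k hk.2.1 hk.2.2]
  rw [h1, h2, h3]
  exact Nat.add_lt_add_left (rank_lt hdag he) _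

lemma step_lemma (n : ℕ) (Q : Matrix (Fin n) (Fin n) ℝ) (E : Finset (Fin n × Fin n))
    (hdag : IsAcyclicEdges n E) (hS : ∀ e ∈ E, Sval n Q e.1 e.2 ≤ 0)
    (x : Fin n → ℝ) (hx : x ∈ Bset n)
    (hviol : ¬ ∀ e ∈ E, x e.1 = 1 → x e.2 = 1) :
    ∃ x', x' ∈ Bset n ∧ measE E x' < measE E x ∧ quadForm n Q x' ≤ quadForm n Q x := by
  push_neg at hviol
  obtain ⟨e, he, hx1, hx2⟩ := hviol
  have hxj : x e.2 = 0 := (hx e.2).resolve_right hx2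
  have hij : e.1 ≠ e.2 := by
    intro h; rw [h, hxj] at hx1; norm_num at hx1
  refine ⟨Function.update (Function.update x e.1 0) e.2 1, ?_, ?_, ?_⟩
  · intro k
    by_cases hk2 : k = e.2
    · subst hk2; right; rw [Function.update_self]
    · by_cases hk1 : k = e.1
      · subst hk1; left; rw [Function.update_of_ne hij, Function.update_self]
      · rw [Function.update_of_ne hk2, Function.update_of_ne hk1]; exact hx k
  · exact meas_update n E hdag x hij he hx1 hxj
  · rw [qf_update n Q x hij hx1 hxj]
    have hD : (∑ k ∈ univ.filter (fun k => k ≠ e.1 ∧ k ≠ e.2),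
        (aCoef n Q e.2 k - aCoef n Q e.1 k) * x k)
        ≤ ∑ k ∈ univ.filter (fun k => k ≠ e.1 ∧ k ≠ e.2),
        max 0 (aCoef n Q e.2 k - aCoef n Q e.1 k) := by
      refine Finset.sum_le_sum (fun k _ => ?_)
      rcases hx k with h0 | h1
      · rw [h0, mul_zero]; exact le_max_left _ _
      · rw [h1, mul_one]; exact le_max_right _ _
    have hSe := hS e he
    rw [Sval] at hSe
    linarith

lemma main_lemma (n : ℕ) (Q : Matrix (Fin n) (Fin n) ℝ) (E : Finset (Fin n × Fin n))
    (hdag : IsAcyclicEdges n E) (hS : ∀ e ∈ E, Sval n Q e.1 e.2 ≤ 0) :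
    ∀ m : ℕ, ∀ x, x ∈ Bset n → measE E x ≤ m →
      ∃ y ∈ BsetG n E, quadForm n Q y ≤ quadForm n Q x := by
  intro m
  induction m with
  | zero =>
    intro x hx hm
    by_cases hG : ∀ e ∈ E, x e.1 = 1 → x e.2 = 1
    · exact ⟨x, ⟨hx, hG⟩, le_refl _⟩
    · obtain ⟨x', _, hlt, _⟩ := step_lemma n Q E hdag hS x hx hG
      omega
  | succ m ih =>
    intro x hx hm
    by_cases hG : ∀ e ∈ E, x e.1 = 1 → x e.2 = 1
    · exact ⟨x, ⟨hx, hG⟩, le_refl _⟩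
    · obtain ⟨x', hx', hlt, hle⟩ := step_lemma n Q E hdag hS x hx hG
      obtain ⟨y, hy, hyle⟩ := ih x' hx' (by omega)
      exact ⟨y, hy, hyle.trans hle⟩

theorem stmt5 (n : ℕ) (Q : Matrix (Fin n) (Fin n) ℝ)
    (E : Finset (Fin n × Fin n)) (hdag : IsAcyclicEdges n E)
    (hS : ∀ e ∈ E, Sval n Q e.1 e.2 ≤ 0) :
    sInf (quadForm n Q '' Bset n) = sInf (quadForm n Q '' BsetG n E) := by
  have hBfin : (Bset n).Finite := by
    apply Set.Finite.subset (Set.Finite.pi (fun _ : Fin n => Set.toFinite ({0, 1} : Set ℝ)))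
    intro x hx i _
    simp only [Set.mem_insert_iff, Set.mem_singleton_iff]
    exact hx i
  have hsub : BsetG n E ⊆ Bset n := fun x hx => hx.1
  have hGfin : (BsetG n E).Finite := hBfin.subset hsub
  have hGne : (BsetG n E).Nonempty := ⟨fun _ => 1, fun i => Or.inr rfl, fun e _ _ => rfl⟩
  have hBne : (Bset n).Nonempty := hGne.mono hsub
  apply le_antisymm
  · exact csInf_le_csInf (hBfin.image _).bddBelow (hGne.image _)
      (Set.image_mono hsub)
  · refine le_csInf (hBne.image _) ?_
    rintro b ⟨x, hx, rfl⟩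
    obtain ⟨y, hy, hle⟩ := main_lemma n Q E hdag hS (measE E x) x hx (le_refl _)
    exact le_trans (csInf_le (hGfin.image _).bddBelow ⟨y, hy, rfl⟩) hle
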